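/- arXiv:2303.11264 — 2 statements merged into one kernel-verified Lean document; each statement's English description precedes it below -/
import Mathlib

section
/- If x0 has at least one nonzero entry, then the dimension of the trajectory set Y(x0) = {y : ∃Φ, Z_{AB}Φ=[I;0], y = Φ_{Nx+1:,:}·x0}, viewed as an affine subspace, equals NuT. -/
open Matrix

/-- Moore–Penrose pseudoinverse conditions. -/
def IsMoorePenrose {m n : Type*} [Fintype m] [Fintype n]
    (M : Matrix m n ℝ) (Mp : Matrix n m ℝ) : Prop :=
  M * Mp * M = M ∧ Mp * M * Mp = Mp ∧ (M * Mp)ᵀ = M * Mp ∧ (Mp * M)ᵀ = Mp * M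

/-- Block-downshift matrix: identity `Nx × Nx` blocks on the first block subdiagonal. -/
def dshift (Nx T : ℕ) : Matrix (Fin (T+1) × Fin Nx) (Fin (T+1) × Fin Nx) ℝ :=
  Matrix.of fun p q => if p.1.val = q.1.val + 1 ∧ p.2 = q.2 then 1 else 0

/-- Block diagonal `Â = blkdiag(A, …, A)` with `T+1` copies. -/
def Ahat {Nx : ℕ} (A : Matrix (Fin Nx) (Fin Nx) ℝ) (T : ℕ) :
    Matrix (Fin (T+1) × Fin Nx) (Fin (T+1) × Fin Nx) ℝ :=
  Matrix.of fun p q => if p.1 = q.1 then A p.2 q.2 else 0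

/-- Block diagonal `B̂ = blkdiag(B, …, B)` with `T` copies, embedded so that `Z * B̂`
has the right dimensions `Nx(T+1) × NuT`. -/
def Bhat {Nx Nu : ℕ} (B : Matrix (Fin Nx) (Fin Nu) ℝ) (T : ℕ) :
    Matrix (Fin (T+1) × Fin Nx) (Fin T × Fin Nu) ℝ :=
  Matrix.of fun p q => if p.1.val = q.1.val then B p.2 q.2 else 0

/-- `Z_{AB} := [I - Z·Â, -Z·B̂]`. -/
def ZAB {Nx Nu : ℕ} (A : Matrix (Fin Nx) (Fin Nx) ℝ) (B : Matrix (Fin Nx) (Fin Nu) ℝ)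
    (T : ℕ) : Matrix (Fin (T+1) × Fin Nx) ((Fin (T+1) × Fin Nx) ⊕ (Fin T × Fin Nu)) ℝ :=
  Matrix.fromCols (1 - dshift Nx T * Ahat A T) (-(dshift Nx T * Bhat B T))

/-- The right-hand side `[I; 0]`: identity in the first `Nx` rows (block `t = 0`),
zeros below. -/
def rhsIO (Nx T : ℕ) : Matrix (Fin (T+1) × Fin Nx) (Fin Nx) ℝ :=
  Matrix.of fun p j => if p.1 = 0 ∧ p.2 = j then 1 else 0

/-- Remove the first `Nx` rows (the block `t = 0` of the state part) of a matrix whose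
rows are indexed like the rows of `Φ`; state block `t` of the result corresponds to
block `t+1` of the input. -/
def tail2 {Nx Nu T : ℕ} {c : Type*}
    (M : Matrix ((Fin (T+1) × Fin Nx) ⊕ (Fin T × Fin Nu)) c ℝ) :
    Matrix ((Fin T × Fin Nx) ⊕ (Fin T × Fin Nu)) c ℝ :=
  Matrix.of fun p j =>
    match p with
    | Sum.inl (t, i) => M (Sum.inl (t.succ, i)) j
    | Sum.inr q => M (Sum.inr q) j

/-- Trajectory set `𝒴(x0)`: trajectories `y = Φ_{Nx+1:,:} x0` over all `Φ` satisfying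
the achievability constraint `Z_{AB} Φ = [I;0]`. -/
def trajSet {Nx Nu : ℕ} (A : Matrix (Fin Nx) (Fin Nx) ℝ)
    (B : Matrix (Fin Nx) (Fin Nu) ℝ) (T : ℕ) (x0 : Fin Nx → ℝ) :
    Set ((Fin T × Fin Nx) ⊕ (Fin T × Fin Nu) → ℝ) :=
  {y | ∃ Φ : Matrix ((Fin (T+1) × Fin Nx) ⊕ (Fin T × Fin Nu)) (Fin Nx) ℝ,
        ZAB A B T * Φ = rhsIO Nx T ∧ y = tail2 Φ *ᵥ x0}

section TS9Aux

lemma ts9_dA_apply_ne {Nx T : ℕ} (A : Matrix (Fin Nx) (Fin Nx) ℝ)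
    (p q : Fin (T+1) × Fin Nx) (h : p.1.val ≠ q.1.val + 1) :
    (dshift Nx T * Ahat A T) p q = 0 := by
  rw [mul_apply]
  apply Finset.sum_eq_zero
  intro r _
  simp only [dshift, Ahat, of_apply]
  by_cases h1 : p.1.val = r.1.val + 1 ∧ p.2 = r.2
  · by_cases h2 : r.1 = q.1
    · exact absurd (h2 ▸ h1.1) h
    · simp [h2]
  · simp [h1]

lemma ts9_dA_pow_apply {Nx T : ℕ} (A : Matrix (Fin Nx) (Fin Nx) ℝ) (k : ℕ)
    (p q : Fin (T+1) × Fin Nx) (h : p.1.val ≠ q.1.val + k) :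
    ((dshift Nx T * Ahat A T) ^ k) p q = 0 := by
  induction k generalizing p q with
  | zero =>
    have : p ≠ q := fun hpq => by subst hpq; omega
    simp [Matrix.one_apply_ne this]
  | succ k ih =>
    rw [pow_succ, mul_apply]
    apply Finset.sum_eq_zero
    intro r _
    by_cases h1 : p.1.val = r.1.val + k
    · have h2 : r.1.val ≠ q.1.val + 1 := by omega
      rw [ts9_dA_apply_ne A r q h2, mul_zero]
    · rw [ih p r h1, zero_mul]

lemma ts9_dA_nilpotent {Nx T : ℕ} (A : Matrix (Fin Nx) (Fin Nx) ℝ) :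
    IsNilpotent (dshift Nx T * Ahat A T) := by
  refine ⟨T + 1, ?_⟩
  ext p q
  rw [ts9_dA_pow_apply A (T+1) p q (by have := p.1.isLt; omega)]
  rfl

lemma ts9_tail2_add {Nx Nu T : ℕ} {c : Type*}
    (M M' : Matrix ((Fin (T+1) × Fin Nx) ⊕ (Fin T × Fin Nu)) c ℝ) :
    tail2 (M + M') = tail2 M + tail2 M' := by
  ext p j
  cases p with
  | inl t => rfl
  | inr q => rfl

lemma ts9_tail2_mul {Nx Nu T : ℕ} {r c : Type*} [Fintype r]
    (M : Matrix ((Fin (T+1) × Fin Nx) ⊕ (Fin T × Fin Nu)) r ℝ)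
    (C : Matrix r c ℝ) : tail2 (M * C) = tail2 M * C := by
  ext p j
  cases p with
  | inl t => rfl
  | inr q => rfl

end TS9Aux

/-- for `x0` with at least one nonzero entry, the trajectory set
`𝒴(x0)` is an affine set of dimension `NuT`. -/
theorem trajSet_dim {Nx Nu T : ℕ}
    (A : Matrix (Fin Nx) (Fin Nx) ℝ) (B : Matrix (Fin Nx) (Fin Nu) ℝ)
    (x0 : Fin Nx → ℝ) (hx0 : x0 ≠ 0) :
    Module.finrank ℝ (vectorSpan ℝ (trajSet A B T x0)) = Nu * T := by
  classical
  set N' : Matrix (Fin (T+1) × Fin Nx) (Fin (T+1) × Fin Nx) ℝ :=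
    1 - dshift Nx T * Ahat A T with hN'
  set Bb : Matrix (Fin (T+1) × Fin Nx) (Fin T × Fin Nu) ℝ :=
    dshift Nx T * Bhat B T with hBb
  set R : Matrix (Fin (T+1) × Fin Nx) (Fin Nx) ℝ := rhsIO Nx T with hR
  have hdet : IsUnit N'.det :=
    (Matrix.isUnit_iff_isUnit_det N').mp (ts9_dA_nilpotent A).isUnit_one_sub
  have hNl : N' * N'⁻¹ = 1 := Matrix.mul_nonsing_inv _ hdet
  have hNr : N'⁻¹ * N' = 1 := Matrix.nonsing_inv_mul _ hdet
  set G : Matrix ((Fin T × Fin Nx) ⊕ (Fin T × Fin Nu)) (Fin T × Fin Nu) ℝ :=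
    tail2 (Matrix.fromRows (N'⁻¹ * Bb) (1 : Matrix (Fin T × Fin Nu) (Fin T × Fin Nu) ℝ))
    with hG
  set y0 : (Fin T × Fin Nx) ⊕ (Fin T × Fin Nu) → ℝ :=
    tail2 (Matrix.fromRows (N'⁻¹ * R)
      (0 : Matrix (Fin T × Fin Nu) (Fin Nx) ℝ)) *ᵥ x0 with hy0
  -- key computation
  have key : ∀ Φu : Matrix (Fin T × Fin Nu) (Fin Nx) ℝ,
      tail2 (Matrix.fromRows (N'⁻¹ * R + N'⁻¹ * Bb * Φu) Φu) *ᵥ x0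
        = y0 + G *ᵥ (Φu *ᵥ x0) := by
    intro Φu
    have h1 : Matrix.fromRows (N'⁻¹ * R + N'⁻¹ * Bb * Φu) Φu
        = Matrix.fromRows (N'⁻¹ * R) (0 : Matrix (Fin T × Fin Nu) (Fin Nx) ℝ)
          + Matrix.fromRows (N'⁻¹ * Bb) 1 * Φu := by
      rw [Matrix.fromRows_mul, Matrix.one_mul]
      ext p j
      cases p with
      | inl t => simp [Matrix.fromRows_apply_inl, Matrix.add_apply]
      | inr q => simp [Matrix.fromRows_apply_inr, Matrix.add_apply]
    rw [h1, ts9_tail2_add, ts9_tail2_mul, Matrix.add_mulVec, ← hG, ← hy0,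
      Matrix.mulVec_mulVec]
  -- set characterization
  have hset : trajSet A B T x0 = {y | ∃ l, y = y0 + G *ᵥ l} := by
    ext y
    constructor
    · rintro ⟨Φ, hc, rfl⟩
      refine ⟨Matrix.toRows₂ Φ *ᵥ x0, ?_⟩
      rw [← Matrix.fromRows_toRows Φ, ZAB, Matrix.fromCols_mul_fromRows,
        ← hN', ← hBb, ← hR, Matrix.neg_mul, ← sub_eq_add_neg,
        sub_eq_iff_eq_add] at hc
      have hΦx : Matrix.toRows₁ Φ = N'⁻¹ * R + N'⁻¹ * Bb * Matrix.toRows₂ Φ := by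
        have h2 := congrArg (fun M => N'⁻¹ * M) hc
        simpa only [← Matrix.mul_assoc, hNr, Matrix.one_mul, Matrix.mul_add]
          using h2
      have hΦ : Φ = Matrix.fromRows (N'⁻¹ * R + N'⁻¹ * Bb * Matrix.toRows₂ Φ)
          (Matrix.toRows₂ Φ) := by
        conv_lhs => rw [← Matrix.fromRows_toRows Φ]
        rw [hΦx]
      conv_lhs => rw [hΦ]
      exact key _
    · rintro ⟨l, rfl⟩
      obtain ⟨i, hi⟩ := Function.ne_iff.mp hx0
      set Φu : Matrix (Fin T × Fin Nu) (Fin Nx) ℝ :=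
        Matrix.of fun q j => if j = i then l q * (x0 i)⁻¹ else 0 with hΦu
      have hl : Φu *ᵥ x0 = l := by
        funext q
        simp only [Matrix.mulVec, dotProduct, hΦu, Matrix.of_apply, ite_mul,
          zero_mul, Finset.sum_ite_eq', Finset.mem_univ, if_true]
        have hi' : x0 i ≠ 0 := by simpa using hi
        rw [mul_assoc, inv_mul_cancel₀ hi', mul_one]
      refine ⟨Matrix.fromRows (N'⁻¹ * R + N'⁻¹ * Bb * Φu) Φu, ?_, ?_⟩
      · rw [ZAB, Matrix.fromCols_mul_fromRows, ← hN', ← hBb, ← hR]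
        simp only [Matrix.mul_add, ← Matrix.mul_assoc, hNl, Matrix.one_mul,
          Matrix.neg_mul]
        abel
      · rw [key Φu, hl]
  -- the direction is the range of G
  have hGinr : ∀ (l : Fin T × Fin Nu → ℝ) (q : Fin T × Fin Nu),
      (G *ᵥ l) (Sum.inr q) = l q := by
    intro l q
    simp only [hG, Matrix.mulVec, dotProduct, tail2, Matrix.of_apply,
      Matrix.fromRows_apply_inr, Matrix.one_apply, ite_mul, one_mul, zero_mul]
    simp [Matrix.one_apply, Finset.sum_ite_eq]
  have hinj : Function.Injective G.mulVecLin := by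
    intro l1 l2 h
    funext q
    have := congrFun h (Sum.inr q)
    simpa [Matrix.mulVecLin_apply, hGinr] using this
  have hspan : vectorSpan ℝ (trajSet A B T x0) = LinearMap.range G.mulVecLin := by
    rw [hset]
    apply le_antisymm
    · rw [vectorSpan_def]
      apply Submodule.span_le.mpr
      rintro v hv
      obtain ⟨a, ⟨l1, rfl⟩, b, ⟨l2, rfl⟩, rfl⟩ := hv
      refine ⟨l1 - l2, ?_⟩
      simp only [Matrix.mulVecLin_apply, Matrix.mulVec_sub]
      rw [vsub_eq_sub]
      abel
    · rintro v ⟨l, rfl⟩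
      have h1 : y0 + G *ᵥ l ∈ {y | ∃ l, y = y0 + G *ᵥ l} := ⟨l, rfl⟩
      have h2 : y0 ∈ {y | ∃ l, y = y0 + G *ᵥ l} := ⟨0, by simp⟩
      have := vsub_mem_vectorSpan ℝ h1 h2
      simpa [Matrix.mulVecLin_apply, vsub_eq_sub] using this
  rw [hspan, LinearMap.finrank_range_of_inj hinj,
    Module.finrank_fintype_fun_eq_card, Fintype.card_prod, Fintype.card_fin,
    Fintype.card_fin, mul_comm]
end

section
/- Sufficient condition for optimal global performance (dynamics-first): if x0 has at least one nonzero entry, there exists Φ satisfying both the dynamics constraint Z_{AB}Φ=[I;0] and locality constraint Φ ∈ L, and rank(Z_h X (I - F†F)) = NuT, then the localized trajectory set Y_L(x0) equals the global trajectory set Y(x0). -/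
open Matrix

/-- Column-wise vectorization: `vec(M) (j, i) = M i j`. -/
def vecc {r c : Type*} (M : Matrix r c ℝ) : c × r → ℝ := fun q => M q.2 q.1

/-- Block-diagonal augmentation `M^blk := blkdiag(M, …, M)`, one copy of `M` per
element of the column-index type `c`, so that `vec(M Λ) = M^blk vec(Λ)`. -/
def blkaug (c : Type*) [DecidableEq c] {r r' : Type*} (M : Matrix r r' ℝ) :
    Matrix (c × r) (c × r') ℝ :=
  Matrix.of fun q p => if q.1 = p.1 then M q.2 p.2 else 0

/-- Augmented state matrix `X(x0) := [(x0)_1 I, …, (x0)_{Nx} I]` (identity blocks of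
size `r`), satisfying `Λ x0 = X(x0) vec(Λ)`. -/
def augX {Nx : ℕ} (r : Type*) [DecidableEq r] (x0 : Fin Nx → ℝ) :
    Matrix r (Fin Nx × r) ℝ :=
  Matrix.of fun i q => if i = q.2 then x0 q.1 else 0








section Aux
variable {Nx Nu T : ℕ} {c : Type*} [Fintype c]

lemma dshift_mul_zero (M : Matrix (Fin (T+1) × Fin Nx) c ℝ) (i : Fin Nx) (q : c) :
    (dshift Nx T * M) (0, i) q = 0 := by
  simp [dshift, mul_apply]

lemma dshift_mul_succ (M : Matrix (Fin (T+1) × Fin Nx) c ℝ) (t : Fin T) (i : Fin Nx) (q : c) :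
    (dshift Nx T * M) (t.succ, i) q = M (t.castSucc, i) q := by
  rw [mul_apply, Fintype.sum_prod_type]
  have : ∀ s : Fin (T+1), ∀ k : Fin Nx,
      dshift Nx T (t.succ, i) (s, k) * M (s, k) q
      = if s = t.castSucc then (if k = i then M (t.castSucc, i) q else 0) else 0 := by
    intro s k
    by_cases hs : s = t.castSucc
    · by_cases hk : k = i
      · subst hs; subst hk; simp [dshift]
      · subst hs; simp [dshift, Ne.symm hk, hk]
    · have h0 : dshift Nx T (t.succ, i) (s, k) = 0 := by
        simp only [dshift, of_apply, ite_eq_right_iff]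
        rintro ⟨h1, -⟩
        refine absurd (Fin.ext ?_ : s = t.castSucc) hs
        rw [Fin.coe_castSucc]
        rw [Fin.val_succ] at h1
        omega
      rw [h0, zero_mul, if_neg hs]
  simp only [this]
  simp

lemma Ahat_mul (A : Matrix (Fin Nx) (Fin Nx) ℝ) (M : Matrix (Fin (T+1) × Fin Nx) c ℝ)
    (s : Fin (T+1)) (i : Fin Nx) (q : c) :
    (Ahat A T * M) (s, i) q = ∑ k, A i k * M (s, k) q := by
  rw [mul_apply, Fintype.sum_prod_type]
  rw [Finset.sum_eq_single s]
  · simp [Ahat]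
  · intro b _ hb; simp [Ahat, Ne.symm hb, hb]
  · simp

lemma Bhat_mul (B : Matrix (Fin Nx) (Fin Nu) ℝ) (M : Matrix (Fin T × Fin Nu) c ℝ)
    (t : Fin T) (i : Fin Nx) (q : c) :
    (Bhat B T * M) (t.castSucc, i) q = ∑ k, B i k * M (t, k) q := by
  rw [mul_apply, Fintype.sum_prod_type]
  rw [Finset.sum_eq_single t]
  · simp [Bhat]
  · intro b _ hb
    have h0 : ∀ k, Bhat B T (t.castSucc, i) (b, k) = 0 := by
      intro k
      simp only [Bhat, of_apply, ite_eq_right_iff, Fin.coe_castSucc]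
      intro h1
      exact absurd (Fin.ext h1.symm : b = t) hb
    simp [h0]
  · simp

end Aux







section Aux2
variable {Nx Nu T : ℕ} {c : Type*} [Fintype c]

lemma tail2_apply_inl (M : Matrix ((Fin (T+1) × Fin Nx) ⊕ (Fin T × Fin Nu)) c ℝ)
    (t : Fin T) (i : Fin Nx) (j : c) :
    tail2 M (Sum.inl (t, i)) j = M (Sum.inl (t.succ, i)) j := rfl

lemma tail2_apply_inr (M : Matrix ((Fin (T+1) × Fin Nx) ⊕ (Fin T × Fin Nu)) c ℝ)
    (q : Fin T × Fin Nu) (j : c) :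
    tail2 M (Sum.inr q) j = M (Sum.inr q) j := rfl

lemma tail2_mul {c' : Type*} [Fintype c'] [DecidableEq c']
    (M : Matrix ((Fin (T+1) × Fin Nx) ⊕ (Fin T × Fin Nu)) c' ℝ) (N : Matrix c' c ℝ) :
    tail2 (M * N) = tail2 (Nu := Nu) M * N := by
  ext p j
  rcases p with ⟨t, i⟩ | q
  · rw [tail2_apply_inl, mul_apply, mul_apply]
    simp [tail2_apply_inl]
  · rw [tail2_apply_inr, mul_apply, mul_apply]
    simp [tail2_apply_inr]

lemma tail2_sub (M N : Matrix ((Fin (T+1) × Fin Nx) ⊕ (Fin T × Fin Nu)) c ℝ) :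
    tail2 (M - N) = tail2 M - tail2 N := by
  ext p j
  rcases p with ⟨t, i⟩ | q <;> simp [tail2_apply_inl, tail2_apply_inr]

lemma tail2_add (M N : Matrix ((Fin (T+1) × Fin Nx) ⊕ (Fin T × Fin Nu)) c ℝ) :
    tail2 (M + N) = tail2 M + tail2 N := by
  ext p j
  rcases p with ⟨t, i⟩ | q <;> simp [tail2_apply_inl, tail2_apply_inr]

lemma hom_struct (A : Matrix (Fin Nx) (Fin Nx) ℝ) (B : Matrix (Fin Nx) (Fin Nu) ℝ)
    (Ψ : Matrix ((Fin (T+1) × Fin Nx) ⊕ (Fin T × Fin Nu)) c ℝ)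
    (h : ZAB A B T * Ψ = 0) :
    Ψ.toRows₁ = dshift Nx T * (Ahat A T * Ψ.toRows₁ + Bhat B T * Ψ.toRows₂) := by
  have h2 : (1 - dshift Nx T * Ahat A T) * Ψ.toRows₁
      + (-(dshift Nx T * Bhat B T)) * Ψ.toRows₂ = 0 := by
    rw [← Matrix.fromCols_mul_fromRows, Matrix.fromRows_toRows]
    exact h
  rw [Matrix.sub_mul, Matrix.one_mul, Matrix.neg_mul] at h2
  rw [Matrix.mul_add, ← Matrix.mul_assoc, ← Matrix.mul_assoc, ← sub_eq_zero, ← h2]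
  abel
end Aux2

section Aux3
variable {Nx Nu T : ℕ} {c : Type*} [Fintype c]

lemma hom0 (A : Matrix (Fin Nx) (Fin Nx) ℝ) (B : Matrix (Fin Nx) (Fin Nu) ℝ)
    (Ψ : Matrix ((Fin (T+1) × Fin Nx) ⊕ (Fin T × Fin Nu)) c ℝ)
    (h : ZAB A B T * Ψ = 0) (i : Fin Nx) (j : c) :
    Ψ (Sum.inl (0, i)) j = 0 := by
  have h1 : Ψ.toRows₁ (0, i) j = Ψ (Sum.inl (0, i)) j := rfl
  rw [← h1, hom_struct A B Ψ h, dshift_mul_zero]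

lemma homS (A : Matrix (Fin Nx) (Fin Nx) ℝ) (B : Matrix (Fin Nx) (Fin Nu) ℝ)
    (Ψ : Matrix ((Fin (T+1) × Fin Nx) ⊕ (Fin T × Fin Nu)) c ℝ)
    (h : ZAB A B T * Ψ = 0) (t : Fin T) (i : Fin Nx) (j : c) :
    Ψ (Sum.inl (t.succ, i)) j
      = ∑ k, A i k * Ψ (Sum.inl (t.castSucc, k)) j
        + ∑ k, B i k * Ψ (Sum.inr (t, k)) j := by
  have h1 : Ψ.toRows₁ (t.succ, i) j = Ψ (Sum.inl (t.succ, i)) j := rfl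
  rw [← h1, hom_struct A B Ψ h, dshift_mul_succ, Matrix.add_apply, Ahat_mul, Bhat_mul]
  rfl

lemma hom_vanish (A : Matrix (Fin Nx) (Fin Nx) ℝ) (B : Matrix (Fin Nx) (Fin Nu) ℝ)
    (Ψ : Matrix ((Fin (T+1) × Fin Nx) ⊕ (Fin T × Fin Nu)) c ℝ)
    (h : ZAB A B T * Ψ = 0) (x0 : c → ℝ)
    (hu : ∀ q : Fin T × Fin Nu, ∑ j, Ψ (Sum.inr q) j * x0 j = 0) :
    ∀ (t : Fin (T+1)) (i : Fin Nx), ∑ j, Ψ (Sum.inl (t, i)) j * x0 j = 0 := by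
  intro t
  induction t using Fin.induction with
  | zero => intro i; simp [hom0 A B Ψ h]
  | succ t ih =>
    intro i
    have hthis : ∀ j, Ψ (Sum.inl (t.succ, i)) j * x0 j
        = (∑ k, A i k * (Ψ (Sum.inl (t.castSucc, k)) j * x0 j))
          + (∑ k, B i k * (Ψ (Sum.inr (t, k)) j * x0 j)) := by
      intro j
      rw [homS A B Ψ h t i j, add_mul, Finset.sum_mul, Finset.sum_mul]
      simp only [mul_assoc]
    calc ∑ j, Ψ (Sum.inl (t.succ, i)) j * x0 j
        = ∑ k, A i k * ∑ j, Ψ (Sum.inl (t.castSucc, k)) j * x0 j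
          + ∑ k, B i k * ∑ j, Ψ (Sum.inr (t, k)) j * x0 j := by
          simp only [hthis, Finset.sum_add_distrib, Finset.mul_sum]
          congr 1 <;> exact Finset.sum_comm
      _ = 0 := by simp [ih, hu (t, _)]

lemma augX_mulVec {r : Type*} [Fintype r] [DecidableEq r] (x0 : Fin Nx → ℝ)
    (v : Fin Nx × r → ℝ) :
    augX r x0 *ᵥ v = (Matrix.of fun (p : r) (j : Fin Nx) => v (j, p)) *ᵥ x0 := by
  ext i
  rw [Matrix.mulVec, Matrix.mulVec]
  simp only [dotProduct, augX, Matrix.of_apply, Fintype.sum_prod_type, ite_mul, zero_mul,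
    Finset.sum_ite_eq, Finset.mem_univ, if_true]
  exact Finset.sum_congr rfl fun j _ => mul_comm _ _

end Aux3

section Aux4
variable {Nx Nu T : ℕ}

lemma traj_zero (A : Matrix (Fin Nx) (Fin Nx) ℝ) (B : Matrix (Fin Nx) (Fin Nu) ℝ)
    (Zdag : Matrix ((Fin (T+1) × Fin Nx) ⊕ (Fin T × Fin Nu)) (Fin (T+1) × Fin Nx) ℝ)
    (hMP1 : ZAB A B T * Zdag * ZAB A B T = ZAB A B T)
    (x0 : Fin Nx → ℝ)
    (Λ : Matrix ((Fin (T+1) × Fin Nx) ⊕ (Fin T × Fin Nu)) (Fin Nx) ℝ)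
    (hv : ∀ q, (tail2 ((1 - Zdag * ZAB A B T) * Λ) *ᵥ x0) (Sum.inr q) = 0) :
    tail2 ((1 - Zdag * ZAB A B T) * Λ) *ᵥ x0 = 0 := by
  set Ψ := (1 - Zdag * ZAB A B T) * Λ with hΨ
  have hz : ZAB A B T * Ψ = 0 := by
    rw [hΨ, ← Matrix.mul_assoc, Matrix.mul_sub, Matrix.mul_one, ← Matrix.mul_assoc, hMP1,
      sub_self, Matrix.zero_mul]
  have hu : ∀ q : Fin T × Fin Nu, ∑ j, Ψ (Sum.inr q) j * x0 j = 0 := by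
    intro q
    simpa [Matrix.mulVec, dotProduct, tail2_apply_inr] using hv q
  have hall := hom_vanish A B Ψ hz x0 hu
  ext p
  rcases p with ⟨t, i⟩ | q
  · simpa [Matrix.mulVec, dotProduct, tail2_apply_inl] using hall t.succ i
  · simpa [Matrix.mulVec, dotProduct, tail2_apply_inr] using hu q

end Aux4


/-- optimal global performance, dynamics-first: if `x0` has a nonzero
entry, some `Φ` satisfies both the dynamics constraint and the locality constraint,
and `rank(Z_h X (I - F†F)) = NuT`, then the localized trajectory set equals the global
trajectory set. -/
theorem localized_eq_global_dynamics_first {Nx Nu T : ℕ}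
    (A : Matrix (Fin Nx) (Fin Nx) ℝ) (B : Matrix (Fin Nx) (Fin Nu) ℝ)
    (Zdag : Matrix ((Fin (T+1) × Fin Nx) ⊕ (Fin T × Fin Nu)) (Fin (T+1) × Fin Nx) ℝ)
    (hMP : IsMoorePenrose (ZAB A B T) Zdag)
    (x0 : Fin Nx → ℝ) (hx0 : x0 ≠ 0)
    (𝔏 : Finset (Fin Nx × ((Fin T × Fin Nx) ⊕ (Fin T × Fin Nu))))
    (Zp : Matrix ((Fin T × Fin Nx) ⊕ (Fin T × Fin Nu)) (Fin Nx) ℝ)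
    (hZp : Zp = tail2 (Zdag * rhsIO Nx T))
    (Zh : Matrix ((Fin T × Fin Nx) ⊕ (Fin T × Fin Nu))
      ((Fin (T+1) × Fin Nx) ⊕ (Fin T × Fin Nu)) ℝ)
    (hZh : Zh = tail2 (1 - Zdag * ZAB A B T))
    (F : Matrix ↥𝔏 (Fin Nx × ((Fin (T+1) × Fin Nx) ⊕ (Fin T × Fin Nu))) ℝ)
    (hF : F = Matrix.of fun l q => blkaug (Fin Nx) Zh l.1 q)
    (Fdag : Matrix (Fin Nx × ((Fin (T+1) × Fin Nx) ⊕ (Fin T × Fin Nu))) ↥𝔏 ℝ)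
    (hMPF : IsMoorePenrose F Fdag)
    (hfeas : ∃ Φ : Matrix ((Fin (T+1) × Fin Nx) ⊕ (Fin T × Fin Nu)) (Fin Nx) ℝ,
      ZAB A B T * Φ = rhsIO Nx T ∧ ∀ l ∈ 𝔏, vecc (tail2 Φ) l = 0)
    (hrank : ((Zh * augX ((Fin (T+1) × Fin Nx) ⊕ (Fin T × Fin Nu)) x0)
        * (1 - Fdag * F)).rank = Nu * T) :
    {y | ∃ Φ : Matrix ((Fin (T+1) × Fin Nx) ⊕ (Fin T × Fin Nu)) (Fin Nx) ℝ,
        ZAB A B T * Φ = rhsIO Nx T ∧ (∀ l ∈ 𝔏, vecc (tail2 Φ) l = 0) ∧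
        y = tail2 Φ *ᵥ x0} =
      trajSet A B T x0 := by
  classical
  set M1 := Zh * augX ((Fin (T+1) × Fin Nx) ⊕ (Fin T × Fin Nu)) x0 with hM1
  set M2 := M1 * (1 - Fdag * F) with hM2
  -- key parametrization
  have key : ∀ v : Fin Nx × ((Fin (T+1) × Fin Nx) ⊕ (Fin T × Fin Nu)) → ℝ,
      M1 *ᵥ v
        = tail2 ((1 - Zdag * ZAB A B T) * Matrix.of fun (p : (Fin (T+1) × Fin Nx) ⊕ (Fin T × Fin Nu)) (j : Fin Nx) => v (j, p)) *ᵥ x0 := by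
    intro v
    rw [hM1, ← Matrix.mulVec_mulVec, augX_mulVec, Matrix.mulVec_mulVec, hZh, ← tail2_mul]
  have hZABhom : ∀ Λ : Matrix ((Fin (T+1) × Fin Nx) ⊕ (Fin T × Fin Nu)) (Fin Nx) ℝ,
      ZAB A B T * ((1 - Zdag * ZAB A B T) * Λ) = 0 := by
    intro Λ
    rw [← Matrix.mul_assoc, Matrix.mul_sub, Matrix.mul_one, ← Matrix.mul_assoc, hMP.1,
      sub_self, Matrix.zero_mul]
  -- injectivity of the input-restriction on range M1
  have hinj : ∀ v, (∀ q, (M1 *ᵥ v) (Sum.inr q) = 0) → M1 *ᵥ v = 0 := by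
    intro v hv
    rw [key v]
    refine traj_zero A B Zdag hMP.1 x0 _ ?_
    intro q
    rw [← key v]
    exact hv q
  -- dimension comparison
  have hSle : Module.finrank ℝ (LinearMap.range M1.mulVecLin) ≤ Nu * T := by
    have hinj' : Function.Injective
        ((LinearMap.funLeft ℝ ℝ (Sum.inr : Fin T × Fin Nu →
            (Fin T × Fin Nx) ⊕ (Fin T × Fin Nu))).comp
          (LinearMap.range M1.mulVecLin).subtype) := by
      rw [← LinearMap.ker_eq_bot]
      refine LinearMap.ker_eq_bot'.mpr ?_
      rintro ⟨s, hs⟩ h0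
      obtain ⟨v, rfl⟩ := hs
      refine Subtype.ext (hinj v fun q => ?_)
      exact congrFun h0 q
    calc Module.finrank ℝ (LinearMap.range M1.mulVecLin)
        ≤ Module.finrank ℝ ((Fin T × Fin Nu) → ℝ) :=
          LinearMap.finrank_le_finrank_of_injective hinj'
      _ = Nu * T := by
          rw [Module.finrank_fintype_fun_eq_card]
          simp [Nat.mul_comm]
  have hSLrank : Module.finrank ℝ (LinearMap.range M2.mulVecLin) = Nu * T := hrank
  have hSLle : LinearMap.range M2.mulVecLin ≤ LinearMap.range M1.mulVecLin := by
    rw [hM2, Matrix.mulVecLin_mul]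
    exact LinearMap.range_comp_le_range _ _
  have hSS : LinearMap.range M2.mulVecLin = LinearMap.range M1.mulVecLin :=
    Submodule.eq_of_le_of_finrank_le hSLle (le_trans hSle hSLrank.ge)
  -- the set equality
  ext y
  simp only [Set.mem_setOf_eq, trajSet]
  constructor
  · rintro ⟨Φ, h1, -, h3⟩
    exact ⟨Φ, h1, h3⟩
  · rintro ⟨Φ, h1, hy⟩
    obtain ⟨Φf, hf1, hf2⟩ := hfeas
    have hdiff : tail2 Φ *ᵥ x0 - tail2 Φf *ᵥ x0 ∈ LinearMap.range M1.mulVecLin := by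
      have hD : ZAB A B T * (Φ - Φf) = 0 := by rw [Matrix.mul_sub, h1, hf1, sub_self]
      have hD2 : (1 - Zdag * ZAB A B T) * (Φ - Φf) = Φ - Φf := by
        rw [Matrix.sub_mul, Matrix.one_mul, Matrix.mul_assoc, hD, Matrix.mul_zero, sub_zero]
      refine ⟨vecc (Φ - Φf), ?_⟩
      rw [Matrix.mulVecLin_apply, key (vecc (Φ - Φf))]
      have hΛ : (Matrix.of fun (p : (Fin (T+1) × Fin Nx) ⊕ (Fin T × Fin Nu)) (j : Fin Nx) => vecc (Φ - Φf) (j, p)) = Φ - Φf := rfl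
      rw [hΛ, hD2, tail2_sub, Matrix.sub_mulVec]
    rw [← hSS] at hdiff
    obtain ⟨w, hw⟩ := hdiff
    rw [Matrix.mulVecLin_apply, hM2, ← Matrix.mulVec_mulVec] at hw
    set u := (1 - Fdag * F) *ᵥ w with husp
    set Λ := (Matrix.of fun (p : (Fin (T+1) × Fin Nx) ⊕ (Fin T × Fin Nu)) (j : Fin Nx) =>
      u (j, p)) with hΛdef
    have hkeyu : M1 *ᵥ u = tail2 ((1 - Zdag * ZAB A B T) * Λ) *ᵥ x0 := key u
    refine ⟨Φf + (1 - Zdag * ZAB A B T) * Λ, ?_, ?_, ?_⟩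
    · rw [Matrix.mul_add, hf1, hZABhom, add_zero]
    · intro l hl
      have expand : tail2 (Φf + (1 - Zdag * ZAB A B T) * Λ) = tail2 Φf + Zh * Λ := by
        rw [tail2_add, tail2_mul, hZh]
      rw [expand]
      have hsplit : vecc (tail2 Φf + Zh * Λ) l = vecc (tail2 Φf) l + vecc (Zh * Λ) l := rfl
      rw [hsplit, hf2 l hl, zero_add]
      have hFu : F *ᵥ u = 0 := by
        rw [husp, Matrix.mulVec_mulVec, Matrix.mul_sub, Matrix.mul_one, ← Matrix.mul_assoc,
          hMPF.1, sub_self, Matrix.zero_mulVec]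
      have hcomp : vecc (Zh * Λ) l = (F *ᵥ u) ⟨l, hl⟩ := by
        simp only [hF, vecc, Matrix.mulVec, dotProduct, Matrix.of_apply, blkaug, mul_apply,
          hΛdef, Fintype.sum_prod_type, ite_mul, zero_mul]
        rw [Finset.sum_comm]
        refine Finset.sum_congr rfl fun q _ => ?_
        rw [Finset.sum_ite_eq]
        simp
      rw [hcomp, hFu]
      rfl
    · rw [hy]
      have expand2 : tail2 (Φf + (1 - Zdag * ZAB A B T) * Λ) *ᵥ x0
          = tail2 Φf *ᵥ x0 + M1 *ᵥ u := by
        rw [tail2_add, Matrix.add_mulVec, hkeyu]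
      rw [expand2, hw]
      abel
end
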